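/- Define the sequence (q_k)_{k ≥ 1} in the Euclidean plane ℝ² by q₁ = (1,0), q₂ = (−1,0), q₃ = (0,1), q₄ = (0,−1), and for k ≥ 5, q_k = (0,1) if k is odd and q_k = (0,−1) if k is even. For each k ≥ 4 let FT_k denote the unique global minimizer over ℝ² of the Weber function W_k(p) = ∑_{j=1}^{k} ‖p − q_j‖ (counted with multiplicity). Then FT_k = (0,0) for every even k ≥ 4, and FT_k = (0, 1/√3) for every odd k ≥ 5; in particular, the sequence (FT_k) does not converge. -/

import Mathlib

open Filter

/-- The point `(x, y)` of the Euclidean plane `ℝ²`. -/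
noncomputable def pt (x y : ℝ) : EuclideanSpace ℝ (Fin 2) :=
  (WithLp.equiv 2 (Fin 2 → ℝ)).symm ![x, y]

lemma norm_sub_pt (p : EuclideanSpace ℝ (Fin 2)) (a b : ℝ) :
    ‖p - pt a b‖ = Real.sqrt ((p 0 - a)^2 + (p 1 - b)^2) := by
  rw [EuclideanSpace.norm_eq]
  simp [pt, Fin.sum_univ_two, Real.norm_eq_abs, sq_abs]

lemma pt_apply0 (a b : ℝ) : (pt a b) 0 = a := by simp [pt]
lemma pt_apply1 (a b : ℝ) : (pt a b) 1 = b := by simp [pt]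

lemma cs (u v x y : ℝ) (h : u^2 + v^2 = 1) : u*x + v*y ≤ Real.sqrt (x^2 + y^2) := by
  have hs := Real.sq_sqrt (show (0:ℝ) ≤ x^2+y^2 by positivity)
  have hn := Real.sqrt_nonneg (x^2+y^2)
  nlinarith [sq_nonneg (u*y - v*x), sq_nonneg (u*x + v*y - Real.sqrt (x^2+y^2)), sq_nonneg (u*x + v*y + Real.sqrt (x^2+y^2))]

lemma cs_eq (u v x y : ℝ) (h : u^2 + v^2 = 1)
    (he : u*x + v*y = Real.sqrt (x^2 + y^2)) :
    x = u * Real.sqrt (x^2+y^2) ∧ y = v * Real.sqrt (x^2+y^2) := by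
  have hs := Real.sq_sqrt (show (0:ℝ) ≤ x^2+y^2 by positivity)
  have h0 : (u*y - v*x)^2 = 0 := by
    linear_combination (x^2+y^2)*h - hs - (Real.sqrt (x^2+y^2) + u*x + v*y) * he
  have h1 : u*y - v*x = 0 := by
    have := sq_eq_zero_iff.mp h0; linarith
  constructor
  · linear_combination (-x)*h + (-v)*h1 + u*he
  · linear_combination (-y)*h + u*h1 + v*he

noncomputable def Wbase (p : EuclideanSpace ℝ (Fin 2)) : ℝ := ‖p - pt 1 0‖ + ‖p - pt (-1) 0‖
noncomputable def WD (p : EuclideanSpace ℝ (Fin 2)) : ℝ := ‖p - pt 0 1‖ + ‖p - pt 0 (-1)‖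
noncomputable def WC (p : EuclideanSpace ℝ (Fin 2)) : ℝ := ‖p - pt 0 1‖

lemma base_ge (p : EuclideanSpace ℝ (Fin 2)) : 2 ≤ Wbase p := by
  have t1 := cs (-1) 0 (p 0 - 1) (p 1 - 0) (by norm_num)
  have t2 := cs 1 0 (p 0 - (-1)) (p 1 - 0) (by norm_num)
  simp only [Wbase, norm_sub_pt]
  linarith

lemma D_ge (p : EuclideanSpace ℝ (Fin 2)) : 2 ≤ WD p := by
  have t1 := cs 0 (-1) (p 0 - 0) (p 1 - 1) (by norm_num)
  have t2 := cs 0 1 (p 0 - 0) (p 1 - (-1)) (by norm_num)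
  simp only [WD, norm_sub_pt]
  linarith

lemma sq3_sq : (Real.sqrt 3)^2 = 3 := Real.sq_sqrt (by norm_num)
lemma sq3_pos : 0 < Real.sqrt 3 := Real.sqrt_pos.mpr (by norm_num)

lemma F_ge (p : EuclideanSpace ℝ (Fin 2)) : Real.sqrt 3 + 1 ≤ Wbase p + WC p := by
  have h3 := sq3_sq
  have t1 := cs (-(Real.sqrt 3/2)) (1/2) (p 0 - 1) (p 1 - 0) (by nlinarith)
  have t2 := cs (Real.sqrt 3/2) (1/2) (p 0 - (-1)) (p 1 - 0) (by nlinarith)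
  have t3 := cs 0 (-1) (p 0 - 0) (p 1 - 1) (by norm_num)
  simp only [Wbase, WC, norm_sub_pt]
  nlinarith [t1, t2, t3]

lemma base_zero : Wbase (pt 0 0) = 2 := by
  simp only [Wbase, norm_sub_pt, pt_apply0, pt_apply1]
  rw [show ((0:ℝ)-1)^2 + ((0:ℝ)-0)^2 = 1 by norm_num,
      show ((0:ℝ)-(-1))^2 + ((0:ℝ)-0)^2 = 1 by norm_num, Real.sqrt_one]
  norm_num

lemma D_zero : WD (pt 0 0) = 2 := by
  simp only [WD, norm_sub_pt, pt_apply0, pt_apply1]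
  rw [show ((0:ℝ)-0)^2 + ((0:ℝ)-1)^2 = 1 by norm_num,
      show ((0:ℝ)-0)^2 + ((0:ℝ)-(-1))^2 = 1 by norm_num, Real.sqrt_one]
  norm_num

lemma inv_sq3_lt_one : 1 / Real.sqrt 3 < 1 := by
  rw [div_lt_one sq3_pos]
  nlinarith [sq3_sq, sq3_pos]

lemma D_p0 : WD (pt 0 (1 / Real.sqrt 3)) = 2 := by
  have h3 := sq3_sq; have hp := sq3_pos
  have hlt := inv_sq3_lt_one
  have h1 : (0:ℝ) < 1 / Real.sqrt 3 := by positivity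
  simp only [WD, norm_sub_pt, pt_apply0, pt_apply1]
  rw [show ((0:ℝ)-0)^2 + (1/Real.sqrt 3 - 1)^2 = (1 - 1/Real.sqrt 3)^2 by ring,
      show ((0:ℝ)-0)^2 + (1/Real.sqrt 3 - (-1))^2 = (1 + 1/Real.sqrt 3)^2 by ring,
      Real.sqrt_sq (by linarith), Real.sqrt_sq (by linarith)]
  ring

lemma F_p0 : Wbase (pt 0 (1 / Real.sqrt 3)) + WC (pt 0 (1 / Real.sqrt 3)) = Real.sqrt 3 + 1 := by
  have h3 := sq3_sq; have hp := sq3_pos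
  have hlt := inv_sq3_lt_one
  have hne : Real.sqrt 3 ≠ 0 := ne_of_gt hp
  simp only [Wbase, WC, norm_sub_pt, pt_apply0, pt_apply1]
  have e1 : ((0:ℝ)-1)^2 + (1/Real.sqrt 3 - 0)^2 = (2/Real.sqrt 3)^2 := by
    field_simp; nlinarith
  have e2 : ((0:ℝ)-(-1))^2 + (1/Real.sqrt 3 - 0)^2 = (2/Real.sqrt 3)^2 := by
    field_simp; nlinarith
  have e3 : ((0:ℝ)-0)^2 + (1/Real.sqrt 3 - 1)^2 = (1 - 1/Real.sqrt 3)^2 := by ring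
  rw [e1, e2, e3, Real.sqrt_sq (by positivity), Real.sqrt_sq (by linarith)]
  field_simp
  nlinarith

lemma base_eq_two (p : EuclideanSpace ℝ (Fin 2)) (h : Wbase p = 2) : p 1 = 0 := by
  have t1 := cs (-1) 0 (p 0 - 1) (p 1 - 0) (by norm_num)
  have t2 := cs 1 0 (p 0 - (-1)) (p 1 - 0) (by norm_num)
  simp only [Wbase, norm_sub_pt] at h
  have he : (-1)*(p 0 - 1) + 0*(p 1 - 0) = Real.sqrt ((p 0 - 1)^2 + (p 1 - 0)^2) := by
    linarith
  have := (cs_eq (-1) 0 (p 0 - 1) (p 1 - 0) (by norm_num) he).2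
  simpa using this

lemma D_eq_two (p : EuclideanSpace ℝ (Fin 2)) (h : WD p = 2) : p 0 = 0 := by
  have t1 := cs 0 (-1) (p 0 - 0) (p 1 - 1) (by norm_num)
  have t2 := cs 0 1 (p 0 - 0) (p 1 - (-1)) (by norm_num)
  simp only [WD, norm_sub_pt] at h
  have he : 0*(p 0 - 0) + (-1)*(p 1 - 1) = Real.sqrt ((p 0 - 0)^2 + (p 1 - 1)^2) := by
    linarith
  have := (cs_eq 0 (-1) (p 0 - 0) (p 1 - 1) (by norm_num) he).1
  simpa using this

lemma F_eq (p : EuclideanSpace ℝ (Fin 2)) (h : Wbase p + WC p = Real.sqrt 3 + 1) :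
    p 0 = 0 ∧ p 1 = 1 / Real.sqrt 3 := by
  have h3 := sq3_sq; have hp := sq3_pos
  have t1 := cs (-(Real.sqrt 3/2)) (1/2) (p 0 - 1) (p 1 - 0) (by nlinarith)
  have t2 := cs (Real.sqrt 3/2) (1/2) (p 0 - (-1)) (p 1 - 0) (by nlinarith)
  have t3 := cs 0 (-1) (p 0 - 0) (p 1 - 1) (by norm_num)
  simp only [Wbase, WC, norm_sub_pt] at h
  have he3 : 0*(p 0 - 0) + (-1)*(p 1 - 1) = Real.sqrt ((p 0 - 0)^2 + (p 1 - 1)^2) := by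
    linarith [t1, t2, t3]
  have he1 : (-(Real.sqrt 3/2))*(p 0 - 1) + (1/2)*(p 1 - 0)
      = Real.sqrt ((p 0 - 1)^2 + (p 1 - 0)^2) := by
    linarith [t1, t2, t3]
  have hx : p 0 = 0 := by
    have := (cs_eq 0 (-1) (p 0 - 0) (p 1 - 1) (by norm_num) he3).1
    simpa using this
  obtain ⟨ha, hb⟩ := cs_eq (-(Real.sqrt 3/2)) (1/2) (p 0 - 1) (p 1 - 0) (by nlinarith) he1
  set s := Real.sqrt ((p 0 - 1)^2 + (p 1 - 0)^2) with hs
  refine ⟨hx, ?_⟩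
  have hsv : Real.sqrt 3 * s = 2 := by
    rw [hx] at ha; nlinarith
  have hy : p 1 = (1/2) * s := by linarith [hb]
  rw [hy]
  rw [eq_div_iff (ne_of_gt hp)]
  nlinarith

lemma eq_pt_of_coords (x : EuclideanSpace ℝ (Fin 2)) (a b : ℝ)
    (h0 : x 0 = a) (h1 : x 1 = b) : x = pt a b := by
  ext i
  fin_cases i
  · simpa [pt] using h0
  · simpa [pt] using h1

set_option maxHeartbeats 2000000 in
/-- For the sequence `q₁ = (1,0)`, `q₂ = (-1,0)`, `q₃ = (0,1)`,
`q₄ = (0,-1)`, and `q_k = (0,1)` for odd `k ≥ 5`, `q_k = (0,-1)` for even `k ≥ 5`, the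
Fermat–Torricelli points `FT_k` of the first `k` points (i.e., the unique global minimizers
of `W_k(p) = ∑_{j=1}^k ‖p - q_j‖`) satisfy `FT_k = (0,0)` for even `k ≥ 4` and
`FT_k = (0, 1/√3)` for odd `k ≥ 5`; in particular the sequence `(FT_k)` does not converge. -/
theorem FT_points_of_special_sequence_diverge
    (q : ℕ → EuclideanSpace ℝ (Fin 2))
    (hq1 : q 1 = pt 1 0) (hq2 : q 2 = pt (-1) 0) (hq3 : q 3 = pt 0 1) (hq4 : q 4 = pt 0 (-1))
    (hqodd : ∀ k, 5 ≤ k → Odd k → q k = pt 0 1)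
    (hqeven : ∀ k, 5 ≤ k → Even k → q k = pt 0 (-1))
    (W : ℕ → EuclideanSpace ℝ (Fin 2) → ℝ)
    (hW : ∀ k (p : EuclideanSpace ℝ (Fin 2)), W k p = ∑ j ∈ Finset.Icc 1 k, ‖p - q j‖) :
    (∀ k, 4 ≤ k → Even k →
      (∀ y : EuclideanSpace ℝ (Fin 2), W k (pt 0 0) ≤ W k y) ∧
      (∀ x : EuclideanSpace ℝ (Fin 2), (∀ y, W k x ≤ W k y) → x = pt 0 0)) ∧
    (∀ k, 5 ≤ k → Odd k →
      (∀ y : EuclideanSpace ℝ (Fin 2), W k (pt 0 (1 / Real.sqrt 3)) ≤ W k y) ∧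
      (∀ x : EuclideanSpace ℝ (Fin 2), (∀ y, W k x ≤ W k y) → x = pt 0 (1 / Real.sqrt 3))) ∧
    (∀ FT : ℕ → EuclideanSpace ℝ (Fin 2),
      (∀ k, 4 ≤ k → ∀ y : EuclideanSpace ℝ (Fin 2), W k (FT k) ≤ W k y) →
      ¬ ∃ L : EuclideanSpace ℝ (Fin 2), Tendsto FT atTop (nhds L)) := by
  have hicc4 : Finset.Icc 1 4 = {1, 2, 3, 4} := by decide
  have hicc5 : Finset.Icc 1 5 = {1, 2, 3, 4, 5} := by decide
  have key4 : ∀ p, W 4 p = Wbase p + WD p := by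
    intro p
    rw [hW, hicc4]
    rw [Finset.sum_insert (by decide), Finset.sum_insert (by decide),
        Finset.sum_insert (by decide), Finset.sum_singleton,
        hq1, hq2, hq3, hq4]
    simp only [Wbase, WD]; ring
  have hq5 : q 5 = pt 0 1 := hqodd 5 le_rfl ⟨2, by norm_num⟩
  have key5 : ∀ p, W 5 p = Wbase p + WC p + WD p := by
    intro p
    rw [hW, hicc5]
    rw [Finset.sum_insert (by decide), Finset.sum_insert (by decide),
        Finset.sum_insert (by decide), Finset.sum_insert (by decide),
        Finset.sum_singleton, hq1, hq2, hq3, hq4, hq5]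
    simp only [Wbase, WC, WD]; ring
  have step : ∀ k, 4 ≤ k → ∀ p, W (k+2) p = W k p + WD p := by
    intro k hk p
    have hiq : ‖p - q (k+1)‖ + ‖p - q (k+2)‖ = WD p := by
      rcases Nat.even_or_odd k with ⟨c, hc⟩ | ⟨c, hc⟩
      · rw [hqodd (k+1) (by omega) ⟨c, by omega⟩, hqeven (k+2) (by omega) ⟨c+1, by omega⟩]
        simp only [WD]
      · rw [hqeven (k+1) (by omega) ⟨c+1, by omega⟩, hqodd (k+2) (by omega) ⟨c+1, by omega⟩]
        simp only [WD]; ring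
    rw [hW, hW, show k+2 = (k+1)+1 by ring, Finset.sum_Icc_succ_top (by omega),
        Finset.sum_Icc_succ_top (by omega), add_assoc, hiq]
  have evenform : ∀ n : ℕ, ∀ p, W (2*n+4) p = Wbase p + ((n:ℝ)+1) * WD p := by
    intro n
    induction n with
    | zero => intro p; simpa using key4 p
    | succ n ih =>
      intro p
      have h1 : W (2*(n+1)+4) p = W (2*n+4) p + WD p := by
        rw [show 2*(n+1)+4 = (2*n+4)+2 by ring]; exact step (2*n+4) (by omega) p
      rw [h1, ih p]; push_cast; ring
  have oddform : ∀ n : ℕ, ∀ p, W (2*n+5) p = Wbase p + WC p + ((n:ℝ)+1) * WD p := by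
    intro n
    induction n with
    | zero => intro p; simpa using key5 p
    | succ n ih =>
      intro p
      have h1 : W (2*(n+1)+5) p = W (2*n+5) p + WD p := by
        rw [show 2*(n+1)+5 = (2*n+5)+2 by ring]; exact step (2*n+5) (by omega) p
      rw [h1, ih p]; push_cast; ring
  have hEven : ∀ k, 4 ≤ k → Even k →
      (∀ y : EuclideanSpace ℝ (Fin 2), W k (pt 0 0) ≤ W k y) ∧
      (∀ x : EuclideanSpace ℝ (Fin 2), (∀ y, W k x ≤ W k y) → x = pt 0 0) := by
    intro k hk hke
    obtain ⟨n, rfl⟩ : ∃ n, k = 2*n+4 := by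
      obtain ⟨c, hc⟩ := hke; exact ⟨c-2, by omega⟩
    constructor
    · intro y
      rw [evenform n y, evenform n (pt 0 0), base_zero, D_zero]
      have h1 := base_ge y; have h2 := D_ge y
      have h3 : ((n:ℝ)+1) * 2 ≤ ((n:ℝ)+1) * WD y :=
        mul_le_mul_of_nonneg_left h2 (by positivity)
      linarith
    · intro x hx
      have hmin := hx (pt 0 0)
      rw [evenform n x, evenform n (pt 0 0), base_zero, D_zero] at hmin
      have h1 := base_ge x; have h2 := D_ge x
      have hc : (0:ℝ) ≤ (n:ℝ) := Nat.cast_nonneg n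
      have hB : WD x = 2 := by nlinarith
      have hA : Wbase x = 2 := by nlinarith
      have e0 := D_eq_two x hB
      have e1 := base_eq_two x hA
      exact eq_pt_of_coords x 0 0 e0 e1
  have hOdd : ∀ k, 5 ≤ k → Odd k →
      (∀ y : EuclideanSpace ℝ (Fin 2), W k (pt 0 (1 / Real.sqrt 3)) ≤ W k y) ∧
      (∀ x : EuclideanSpace ℝ (Fin 2), (∀ y, W k x ≤ W k y) → x = pt 0 (1 / Real.sqrt 3)) := by
    intro k hk hko
    obtain ⟨n, rfl⟩ : ∃ n, k = 2*n+5 := by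
      obtain ⟨c, hc⟩ := hko; exact ⟨c-2, by omega⟩
    have hF0 := F_p0
    have hD0 := D_p0
    constructor
    · intro y
      rw [oddform n y, oddform n (pt 0 (1/Real.sqrt 3)), hD0]
      have h1 := F_ge y; have h2 := D_ge y
      have h3 : ((n:ℝ)+1) * 2 ≤ ((n:ℝ)+1) * WD y :=
        mul_le_mul_of_nonneg_left h2 (by positivity)
      linarith
    · intro x hx
      have hmin := hx (pt 0 (1/Real.sqrt 3))
      rw [oddform n x, oddform n (pt 0 (1/Real.sqrt 3)), hD0] at hmin
      have h1 := F_ge x; have h2 := D_ge x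
      have hc : (0:ℝ) ≤ (n:ℝ) := Nat.cast_nonneg n
      have hB : WD x = 2 := by nlinarith
      have hA : Wbase x + WC x = Real.sqrt 3 + 1 := by nlinarith
      obtain ⟨e0, e1⟩ := F_eq x hA
      exact eq_pt_of_coords x 0 (1/Real.sqrt 3) e0 e1
  refine ⟨hEven, hOdd, ?_⟩
  intro FT hFT ⟨L, hL⟩
  have heq1 : ∀ n : ℕ, FT (2*n+4) = pt 0 0 := fun n =>
    (hEven (2*n+4) (by omega) ⟨n+2, by ring⟩).2 (FT (2*n+4)) (hFT (2*n+4) (by omega))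
  have heq2 : ∀ n : ℕ, FT (2*n+5) = pt 0 (1/Real.sqrt 3) := fun n =>
    (hOdd (2*n+5) (by omega) ⟨n+2, by ring⟩).2 (FT (2*n+5)) (hFT (2*n+5) (by omega))
  have ht1 : Tendsto (fun n : ℕ => FT (2*n+4)) atTop (nhds L) :=
    hL.comp (tendsto_atTop_atTop.mpr fun b => ⟨b, fun a ha => by omega⟩)
  have ht2 : Tendsto (fun n : ℕ => FT (2*n+5)) atTop (nhds L) :=
    hL.comp (tendsto_atTop_atTop.mpr fun b => ⟨b, fun a ha => by omega⟩)
  rw [show (fun n : ℕ => FT (2*n+4)) = fun _ => pt 0 0 from funext heq1] at ht1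
  rw [show (fun n : ℕ => FT (2*n+5)) = fun _ => pt 0 (1/Real.sqrt 3) from funext heq2] at ht2
  have hL1 : L = pt 0 0 := tendsto_nhds_unique ht1 tendsto_const_nhds
  have hL2 : L = pt 0 (1/Real.sqrt 3) := tendsto_nhds_unique ht2 tendsto_const_nhds
  have h : pt 0 0 = pt 0 (1/Real.sqrt 3) := hL1.symm.trans hL2
  have h1 : (pt 0 0) 1 = (pt 0 (1/Real.sqrt 3)) 1 := by rw [h]
  rw [pt_apply1, pt_apply1] at h1
  have : (0:ℝ) < 1 / Real.sqrt 3 := by positivity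
  linarith
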